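/- (Theorem 1, PATT.) Suppose μ(A=1, S=0) > 0; that consistency and parallel trends hold; that every w with μ(W=w, A=1, S=0) > 0 satisfies μ(W=w, A=1, S=1) > 0 and μ(W=w, A=0, S=1) > 0; that mean latent exchangeability of selection holds in arm a=1; and that U-homogeneity holds. Then the population average treatment effect in the treated is identified: E[Y₁(1) − Y₁(0) | A=1, S=0] = Σ_w (m₁(w) − m₀(w)) · μ({W=w} | {A=1, S=0}). -/

import Mathlib

open MeasureTheory ProbabilityTheory
open scoped Classical

noncomputable section

/-- Conditional expectation of `X` given the event `E`. -/
def cexp {Ω : Type*} [MeasurableSpace Ω] (μ : Measure Ω) (X : Ω → ℝ) (E : Set Ω) : ℝ :=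
  ∫ ω, X ω ∂(μ[|E])

/-- The event `{W = w, A = a, S = s}`. -/
def evtWAS {Ω 𝒲 : Type*} (W : Ω → 𝒲) (A S : Ω → Bool) (w : 𝒲) (a s : Bool) : Set Ω :=
  {ω | W ω = w ∧ A ω = a ∧ S ω = s}

/-- The event `{W = w, U = u, A = a, S = s}`. -/
def evtWUAS {Ω 𝒲 𝒰 : Type*} (W : Ω → 𝒲) (U : Ω → 𝒰) (A S : Ω → Bool)
    (w : 𝒲) (u : 𝒰) (a s : Bool) : Set Ω :=
  {ω | W ω = w ∧ U ω = u ∧ A ω = a ∧ S ω = s}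

/-- The event `{A = a, S = s}`. -/
def evtAS {Ω : Type*} (A S : Ω → Bool) (a s : Bool) : Set Ω :=
  {ω | A ω = a ∧ S ω = s}

/-- The outcome-difference regression `m_a(w) = E[Y₁ - Y₀ | W = w, A = a, S = 1]`. -/
def mfun {Ω 𝒲 : Type*} [MeasurableSpace Ω] (μ : Measure Ω) (W : Ω → 𝒲) (A S : Ω → Bool)
    (Y₀ Y₁ : Ω → ℝ) (a : Bool) (w : 𝒲) : ℝ :=
  cexp μ (fun ω => Y₁ ω - Y₀ ω) (evtWAS W A S w a true)

/- Auxiliary lemmas -/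

lemma cexp_eq {Ω : Type*} [MeasurableSpace Ω] (μ : Measure Ω) (X : Ω → ℝ) (E : Set Ω) :
    cexp μ X E = (μ E).toReal⁻¹ * ∫ ω in E, X ω ∂μ := by
  rw [cexp, ProbabilityTheory.cond, integral_smul_measure, ENNReal.toReal_inv, smul_eq_mul]

lemma setIntegral_eq_cexp {Ω : Type*} [MeasurableSpace Ω] (μ : Measure Ω) (X : Ω → ℝ)
    (E : Set Ω) (hE : μ E ≠ ⊤) :
    ∫ ω in E, X ω ∂μ = (μ E).toReal * cexp μ X E := by
  rcases eq_or_ne (μ E) 0 with h0 | h0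
  · rw [Measure.restrict_eq_zero.mpr h0, integral_zero_measure, h0]
    simp
  · rw [cexp_eq]
    have ht : (μ E).toReal ≠ 0 := ENNReal.toReal_ne_zero.mpr ⟨h0, hE⟩
    field_simp

lemma cexp_congr_on {Ω : Type*} [MeasurableSpace Ω] (μ : Measure Ω) {f g : Ω → ℝ}
    {E : Set Ω} (hE : MeasurableSet E) (h : ∀ ω ∈ E, f ω = g ω) :
    cexp μ f E = cexp μ g E := by
  rw [cexp_eq, cexp_eq, setIntegral_congr_fun hE h]

lemma integrable_cond {Ω : Type*} [MeasurableSpace Ω] {μ : Measure Ω} {f : Ω → ℝ}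
    {E : Set Ω} (hf : Integrable f μ) (hE : μ E ≠ 0) : Integrable f (μ[|E]) := by
  rw [ProbabilityTheory.cond]
  exact (hf.restrict).smul_measure (by simp [hE])

lemma cexp_sub {Ω : Type*} [MeasurableSpace Ω] (μ : Measure Ω) {f g : Ω → ℝ}
    {E : Set Ω} (hf : Integrable f μ) (hg : Integrable g μ) (hE : μ E ≠ 0) :
    cexp μ (fun ω => f ω - g ω) E = cexp μ f E - cexp μ g E := by
  rw [cexp, cexp, cexp]
  exact integral_sub (integrable_cond hf hE) (integrable_cond hg hE)

/-- Theorem 1, PATT: under consistency, parallel trends, positivity, mean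
latent exchangeability of selection in arm a = 1, latent positivity of selection, and
U-homogeneity, the PATT is identified. -/
theorem transport_identifies_PATT
    {Ω : Type*} [MeasurableSpace Ω] (μ : Measure Ω) [IsProbabilityMeasure μ]
    {𝒲 : Type*} [Fintype 𝒲] [MeasurableSpace 𝒲] [MeasurableSingletonClass 𝒲]
    {𝒰 : Type*} [Fintype 𝒰] [MeasurableSpace 𝒰] [MeasurableSingletonClass 𝒰]
    (S A : Ω → Bool) (W : Ω → 𝒲) (U : Ω → 𝒰) (Y₀ Y₁ Ypot0 Ypot1 : Ω → ℝ)
    (hS : Measurable S) (hA : Measurable A) (hW : Measurable W) (hU : Measurable U)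
    (hY₀ : Integrable Y₀ μ) (hY₁ : Integrable Y₁ μ)
    (hPot0 : Integrable Ypot0 μ) (hPot1 : Integrable Ypot1 μ)
    -- consistency
    (hcons0 : ∀ ω, A ω = false → Ypot0 ω = Y₁ ω)
    (hcons1 : ∀ ω, A ω = true → Ypot1 ω = Y₁ ω)
    -- parallel trends
    (hPT : ∀ w : 𝒲, 0 < μ (evtWAS W A S w false true) → 0 < μ (evtWAS W A S w true true) →
      cexp μ (fun ω => Ypot0 ω - Y₀ ω) (evtWAS W A S w true true)
        = cexp μ (fun ω => Ypot0 ω - Y₀ ω) (evtWAS W A S w false true))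
    -- the treated target is nonempty
    (hA1S0 : 0 < μ (evtAS A S true false))
    -- positivity
    (hpos : ∀ w : 𝒲, 0 < μ (evtWAS W A S w true false) →
      0 < μ (evtWAS W A S w true true) ∧ 0 < μ (evtWAS W A S w false true))
    -- latent positivity of selection (arm a = 1)
    (hposSel : ∀ (w : 𝒲) (u : 𝒰), 0 < μ (evtWUAS W U A S w u true false) →
      0 < μ (evtWUAS W U A S w u true true))
    -- mean latent exchangeability of selection (arm a = 1)
    (hexchSel : ∀ (w : 𝒲) (u : 𝒰), 0 < μ (evtWUAS W U A S w u true false) →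
      cexp μ (fun ω => Ypot1 ω - Ypot0 ω) (evtWUAS W U A S w u true false)
        = cexp μ (fun ω => Ypot1 ω - Ypot0 ω) (evtWUAS W U A S w u true true))
    -- U-homogeneity
    (hUhom : ∀ (w : 𝒲) (u : 𝒰) (a s : Bool), 0 < μ (evtWUAS W U A S w u a s) →
      cexp μ (fun ω => Ypot1 ω - Ypot0 ω) (evtWUAS W U A S w u a s)
        = cexp μ (fun ω => Ypot1 ω - Ypot0 ω) (evtWAS W A S w a s)) :
    cexp μ (fun ω => Ypot1 ω - Ypot0 ω) (evtAS A S true false)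
      = ∑ w : 𝒲, (mfun μ W A S Y₀ Y₁ true w - mfun μ W A S Y₀ Y₁ false w)
          * ((μ[|evtAS A S true false]) {ω | W ω = w}).toReal := by
  set τ : Ω → ℝ := fun ω => Ypot1 ω - Ypot0 ω with hτ
  -- measurability of events
  have hmWAS : ∀ (w : 𝒲) (a s : Bool), MeasurableSet (evtWAS W A S w a s) := by
    intro w a s
    have h : evtWAS W A S w a s = W ⁻¹' {w} ∩ (A ⁻¹' {a} ∩ S ⁻¹' {s}) := by
      ext ω; simp [evtWAS]
    rw [h]
    exact (hW (measurableSet_singleton _)).inter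
      ((hA (measurableSet_singleton _)).inter (hS (measurableSet_singleton _)))
  have hmE : MeasurableSet (evtAS A S true false) := by
    have h : evtAS A S true false = A ⁻¹' {true} ∩ S ⁻¹' {false} := by
      ext ω; simp [evtAS]
    rw [h]
    exact (hA (measurableSet_singleton _)).inter (hS (measurableSet_singleton _))
  set E := evtAS A S true false with hEdef
  have hEne : μ E ≠ ⊤ := measure_ne_top μ E
  have hEnz : μ E ≠ 0 := hA1S0.ne'
  -- key per-stratum identity
  have hkey : ∀ w : 𝒲, 0 < μ (evtWAS W A S w true false) →
      cexp μ τ (evtWAS W A S w true false)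
        = mfun μ W A S Y₀ Y₁ true w - mfun μ W A S Y₀ Y₁ false w := by
    intro w hw
    -- step A: transport to S = 1
    have hexu : ∃ u : 𝒰, 0 < μ (evtWUAS W U A S w u true false) := by
      by_contra hcon
      push_neg at hcon
      have hz : ∀ u, μ (evtWUAS W U A S w u true false) = 0 :=
        fun u => le_antisymm (hcon u) zero_le
      have hsub : evtWAS W A S w true false ⊆ ⋃ u, evtWUAS W U A S w u true false := by
        rintro ω ⟨h1, h2, h3⟩
        exact Set.mem_iUnion.mpr ⟨U ω, ⟨h1, rfl, h2, h3⟩⟩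
      have hle := (measure_mono hsub).trans
        (measure_iUnion_le (μ := μ) (fun u => evtWUAS W U A S w u true false))
      simp only [hz, tsum_zero, nonpos_iff_eq_zero] at hle
      exact hw.ne' hle
    obtain ⟨u, hu⟩ := hexu
    have hstepA : cexp μ τ (evtWAS W A S w true false) = cexp μ τ (evtWAS W A S w true true) := by
      calc cexp μ τ (evtWAS W A S w true false)
          = cexp μ τ (evtWUAS W U A S w u true false) := (hUhom w u true false hu).symm
        _ = cexp μ τ (evtWUAS W U A S w u true true) := hexchSel w u hu
        _ = cexp μ τ (evtWAS W A S w true true) := hUhom w u true true (hposSel w u hu)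
    obtain ⟨hE1, hE0⟩ := hpos w hw
    -- step B: DiD on S = 1
    have hsplit : cexp μ τ (evtWAS W A S w true true)
        = cexp μ (fun ω => Ypot1 ω - Y₀ ω) (evtWAS W A S w true true)
          - cexp μ (fun ω => Ypot0 ω - Y₀ ω) (evtWAS W A S w true true) := by
      rw [cexp_sub μ hPot1 hPot0 hE1.ne', cexp_sub μ hPot1 hY₀ hE1.ne',
        cexp_sub μ hPot0 hY₀ hE1.ne']
      ring
    have hB1 : cexp μ (fun ω => Ypot1 ω - Y₀ ω) (evtWAS W A S w true true)
        = mfun μ W A S Y₀ Y₁ true w := by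
      apply cexp_congr_on μ (hmWAS w true true)
      rintro ω ⟨_, h2, _⟩
      rw [hcons1 ω h2]
    have hB0 : cexp μ (fun ω => Ypot0 ω - Y₀ ω) (evtWAS W A S w true true)
        = mfun μ W A S Y₀ Y₁ false w := by
      rw [hPT w hE0 hE1]
      apply cexp_congr_on μ (hmWAS w false true)
      rintro ω ⟨_, h2, _⟩
      rw [hcons0 ω h2]
    rw [hstepA, hsplit, hB1, hB0]
  -- decomposition of E into strata
  have hEunion : E = ⋃ w : 𝒲, evtWAS W A S w true false := by
    ext ω
    constructor
    · rintro ⟨h1, h2⟩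
      exact Set.mem_iUnion.mpr ⟨W ω, rfl, h1, h2⟩
    · rintro hω
      obtain ⟨w, _, h2, h3⟩ := Set.mem_iUnion.mp hω
      exact ⟨h2, h3⟩
  have hdisj : Pairwise (Function.onFun Disjoint (fun w => evtWAS W A S w true false)) := by
    intro w w' hne
    apply Set.disjoint_left.mpr
    rintro ω ⟨h1, _, _⟩ ⟨h1', _, _⟩
    exact hne (h1 ▸ h1')
  have hint : IntegrableOn τ (⋃ w : 𝒲, evtWAS W A S w true false) μ :=
    (hPot1.sub hPot0).integrableOn
  have hIE : ∫ ω in E, τ ω ∂μ = ∑ w : 𝒲, ∫ ω in evtWAS W A S w true false, τ ω ∂μ := by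
    rw [hEunion, integral_iUnion (fun w => hmWAS w true false) hdisj hint, tsum_fintype]
  -- the conditional probability weights
  have hweight : ∀ w : 𝒲, ((μ[|E]) {ω | W ω = w}).toReal
      = (μ E).toReal⁻¹ * (μ (evtWAS W A S w true false)).toReal := by
    intro w
    have hinter : E ∩ {ω | W ω = w} = evtWAS W A S w true false := by
      ext ω
      constructor
      · rintro ⟨⟨h1, h2⟩, h3⟩; exact ⟨h3, h1, h2⟩
      · rintro ⟨h1, h2, h3⟩; exact ⟨⟨h2, h3⟩, h1⟩
    rw [cond_apply hmE, hinter, ENNReal.toReal_mul, ENNReal.toReal_inv]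
  -- put it together
  calc cexp μ τ E
      = (μ E).toReal⁻¹ * ∑ w : 𝒲, ∫ ω in evtWAS W A S w true false, τ ω ∂μ := by
        rw [cexp_eq, hIE]
    _ = ∑ w : 𝒲, (μ E).toReal⁻¹
          * ((μ (evtWAS W A S w true false)).toReal * cexp μ τ (evtWAS W A S w true false)) := by
        rw [Finset.mul_sum]
        refine Finset.sum_congr rfl fun w _ => ?_
        rw [setIntegral_eq_cexp μ τ _ (measure_ne_top μ _)]
    _ = ∑ w : 𝒲, (mfun μ W A S Y₀ Y₁ true w - mfun μ W A S Y₀ Y₁ false w)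
          * ((μ[|E]) {ω | W ω = w}).toReal := by
        refine Finset.sum_congr rfl fun w _ => ?_
        rw [hweight w]
        rcases eq_or_ne (μ (evtWAS W A S w true false)) 0 with h0 | h0
        · rw [h0]; simp
        · rw [hkey w (pos_iff_ne_zero.mpr h0)]
          ring
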